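/- Let K be a real-valued field whose residue field K̃ = K°/K°° is perfect, let p be the exponential characteristic of K̃ (p = char K̃ if this is positive, p = 1 otherwise), and assume the value group |K^×| ⊆ ℝ_{>0} is p-divisible. Let L = K(t₁,…,tₙ) be a purely transcendental extension equipped with a nonarchimedean absolute value extending that of K, and set rᵢ = |tᵢ| > 0. If dt₁/t₁, …, dtₙ/tₙ form an orthonormal basis of Ω_{L/K} with respect to the Kähler seminorm, then the absolute value of L restricts on the polynomial ring K[t₁,…,tₙ] to the Gauss absolute value |·|_r, i.e., |Σ_{l∈ℕⁿ} a_l t^l| = max_l |a_l|·r₁^{l₁}⋯rₙ^{lₙ}. -/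

import Mathlib

open scoped NNReal
open MvPolynomial

/-- The Kähler seminorm on `Ω[B⁄A]` induced by a seminorm `vB` on `B`. -/
noncomputable def kahlerSeminorm (A B : Type*) [CommRing A] [CommRing B] [Algebra A B]
    (vB : B → ℝ≥0) (x : Ω[B⁄A]) : ℝ≥0 :=
  sInf { r | ∃ (n : ℕ) (c b : Fin n → B),
    x = ∑ i, c i • KaehlerDifferential.D A B (b i) ∧
    r = Finset.univ.sup fun i => vB (c i) * vB (b i) }

namespace GaussAux

theorem pow_inj {p : ℕ} (hp : p ≠ 0) {a b : ℝ≥0} (h : a ^ p = b ^ p) : a = b := by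
  rcases lt_trichotomy a b with h' | h' | h'
  · exact absurd h (ne_of_lt (pow_lt_pow_left₀ h' zero_le hp))
  · exact h'
  · exact absurd h (ne_of_gt (pow_lt_pow_left₀ h' zero_le hp))

theorem derivation_aeval {K L M : Type*} [CommRing K] [CommRing L] [Algebra K L]
    [AddCommGroup M] [Module L M] [Module K M] [IsScalarTower K L M]
    (d : Derivation K L M) {n : ℕ} (t : Fin n → L) (P : MvPolynomial (Fin n) K) :
    d (MvPolynomial.aeval t P)
      = ∑ i, MvPolynomial.aeval t (MvPolynomial.pderiv i P) • d (t i) := by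
  induction P using MvPolynomial.induction_on with
  | C a => simp
  | add p q hp hq =>
      simp only [map_add, hp, hq, ← Finset.sum_add_distrib, add_smul]
  | mul_X p j hp =>
      have key : ∀ i : Fin n, (aeval t) ((pderiv i) (p * X j))
          = aeval t (pderiv i p) * t j + aeval t p * (if i = j then 1 else 0) := by
        intro i
        rw [pderiv_mul, map_add, map_mul, map_mul, aeval_X]
        congr 1
        by_cases h : i = j
        · subst h; simp
        · simp [pderiv_X, Pi.single_apply, h]
      rw [map_mul, aeval_X, Derivation.leibniz, hp, Finset.smul_sum]
      simp only [key, add_smul, Finset.sum_add_distrib]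
      rw [add_comm]
      congr 1
      · refine Finset.sum_congr rfl fun i _ => ?_
        rw [smul_smul, mul_comm]
      · rw [Finset.sum_eq_single j]
        · simp
        · intro i _ hij; simp [hij]
        · simp

theorem coeff_pderiv {K : Type*} [CommRing K] {n : ℕ} (i : Fin n)
    (m : Fin n →₀ ℕ) (P : MvPolynomial (Fin n) K) :
    MvPolynomial.coeff m (MvPolynomial.pderiv i P)
      = (m i + 1 : ℕ) * MvPolynomial.coeff (m + Finsupp.single i 1) P := by
  induction P using MvPolynomial.induction_on' with
  | monomial s a =>
      rw [pderiv_monomial, coeff_monomial, coeff_monomial]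
      by_cases h : s = m + Finsupp.single i 1
      · subst h
        have h1 : m + Finsupp.single i 1 - Finsupp.single i 1 = m := by
          ext j; simp
        have h2 : ((m + Finsupp.single i 1 : Fin n →₀ ℕ)) i = m i + 1 := by simp
        rw [if_pos h1, h2, if_pos rfl, mul_comm]
      · rw [if_neg h, mul_zero]
        by_cases h2 : s - Finsupp.single i 1 = m
        · rw [if_pos h2]
          have hsi : s i = 0 := by
            by_contra hsi
            apply h
            rw [← h2]
            ext j
            by_cases hj : j = i
            · subst hj; simp; omega
            · simp [Finsupp.single_apply, Ne.symm hj]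
          rw [hsi]; simp
        · rw [if_neg h2]
  | add p q hp hq => simp [hp, hq, mul_add]

theorem val_natCast_le_one {R : Type*} [CommRing R] (v : Valuation R ℝ≥0) (m : ℕ) :
    v (m : R) ≤ 1 := by
  induction m with
  | zero => simp
  | succ k ih =>
      push_cast
      exact le_trans (v.map_add _ _) (max_le ih (le_of_eq v.map_one))

theorem val_add_pow {R : Type*} [CommRing R] (v : Valuation R ℝ≥0)
    {p : ℕ} (hp : p.Prime) (x y : R) (B : ℝ≥0) (hx : v x ≤ B) (hy : v y ≤ B) :
    v ((x + y) ^ p - x ^ p - y ^ p) ≤ v (p : R) * B ^ p := by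
  have hset : Finset.range (p + 1) = insert 0 (insert p (Finset.Ioo 0 p)) := by
    ext k
    simp only [Finset.mem_range, Finset.mem_insert, Finset.mem_Ioo]
    omega
  have h1 : (x + y) ^ p - x ^ p - y ^ p
      = ∑ k ∈ Finset.Ioo 0 p, x ^ k * y ^ (p - k) * (p.choose k : R) := by
    rw [add_pow, hset, Finset.sum_insert (by
      simp only [Finset.mem_insert, Finset.mem_Ioo]
      push_neg
      exact ⟨hp.pos.ne, fun h => absurd h (lt_irrefl 0)⟩), Finset.sum_insert (by simp)]
    simp only [pow_zero, one_mul, Nat.choose_zero_right, Nat.cast_one, mul_one,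
      Nat.sub_self, Nat.choose_self, Nat.sub_zero]
    ring
  rw [h1]
  apply Valuation.map_sum_le
  intro k hk
  obtain ⟨hk0, hkp⟩ := Finset.mem_Ioo.mp hk
  obtain ⟨c, hc⟩ := hp.dvd_choose_self hk0.ne' hkp
  rw [hc]
  push_cast
  rw [map_mul, map_mul, map_mul, map_pow, map_pow]
  calc v x ^ k * v y ^ (p - k) * (v (p : R) * v (c : R))
      ≤ B ^ k * B ^ (p - k) * (v (p : R) * 1) :=
        mul_le_mul' (mul_le_mul' (pow_le_pow_left' hx k) (pow_le_pow_left' hy (p - k)))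
          (mul_le_mul' le_rfl (val_natCast_le_one v c))
    _ = v (p : R) * B ^ p := by
        rw [mul_one, ← pow_add, Nat.add_sub_cancel' hkp.le, mul_comm]

theorem val_sum_pow {R ι : Type*} [CommRing R] (v : Valuation R ℝ≥0)
    {p : ℕ} (hp : p.Prime) (s : Finset ι) (x : ι → R) (B : ℝ≥0)
    (hx : ∀ i ∈ s, v (x i) ≤ B) :
    v ((∑ i ∈ s, x i) ^ p - ∑ i ∈ s, x i ^ p) ≤ v (p : R) * B ^ p := by
  classical
  induction s using Finset.induction_on with
  | empty => simp [zero_pow hp.ne_zero]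
  | insert a s₀ ha ih =>
      rw [Finset.sum_insert ha, Finset.sum_insert ha]
      have hS : v (∑ i ∈ s₀, x i) ≤ B :=
        Valuation.map_sum_le v fun i hi => hx i (Finset.mem_insert_of_mem hi)
      have key : (x a + ∑ i ∈ s₀, x i) ^ p - (x a ^ p + ∑ i ∈ s₀, x i ^ p)
          = ((x a + ∑ i ∈ s₀, x i) ^ p - x a ^ p - (∑ i ∈ s₀, x i) ^ p)
            + ((∑ i ∈ s₀, x i) ^ p - ∑ i ∈ s₀, x i ^ p) := by ring
      rw [key]
      refine le_trans (v.map_add _ _) (max_le ?_ ?_)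
      · exact val_add_pow v hp _ _ B (hx a (Finset.mem_insert_self a s₀)) hS
      · exact ih fun i hi => hx i (Finset.mem_insert_of_mem hi)

theorem root_approx {K kres : Type*} [Field K] [Field kres]
    (vK : Valuation K ℝ≥0) (p : ℕ) [ExpChar kres p] [PerfectRing kres p]
    (π : ↥vK.integer →+* kres) (hπsurj : Function.Surjective π)
    (hπker : ∀ x : vK.integer, π x = 0 ↔ vK ↑x < 1)
    (hdiv : ∀ x : K, x ≠ 0 → ∃ y : K, vK y ^ p = vK x)
    (a : K) (ha : a ≠ 0) :
    ∃ c : K, vK c ^ p = vK a ∧ vK (a - c ^ p) < vK a := by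
  have hva : vK a ≠ 0 := by simpa using ha
  obtain hP1 | ⟨hp⟩ := ‹ExpChar kres p›
  · exact ⟨a, by simp, by simpa using zero_lt_iff.mpr hva⟩
  obtain ⟨b, hb⟩ := hdiv a ha
  have hb0 : b ≠ 0 := by
    intro h
    apply hva
    rw [← hb, h]
    simp [zero_pow hp.ne_zero]
  have hu1 : vK (a / b ^ p) = 1 := by
    rw [map_div₀, map_pow, hb]
    exact div_self hva
  have huI : a / b ^ p ∈ vK.integer := le_of_eq hu1
  obtain ⟨w, hw⟩ := surjective_frobenius kres p (π ⟨_, huI⟩)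
  obtain ⟨y, hy⟩ := hπsurj w
  have hπ0 : π (y ^ p - ⟨_, huI⟩) = 0 := by
    rw [map_sub, map_pow, hy, ← hw, frobenius_def, sub_self]
  have hlt1 : vK ((y : K) ^ p - a / b ^ p) < 1 := by
    have h2 := (hπker _).mp hπ0
    have h3 : ((y ^ p - (⟨_, huI⟩ : vK.integer) : vK.integer) : K)
        = (y : K) ^ p - a / b ^ p := by push_cast; ring
    rwa [h3] at h2
  have hyp1 : vK ((y : K)) ^ p = 1 := by
    rw [← map_pow]
    have heq : (y : K) ^ p = a / b ^ p + ((y : K) ^ p - a / b ^ p) := by ring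
    rw [heq, Valuation.map_add_eq_of_lt_left vK (by rw [hu1]; exact hlt1)]
    exact hu1
  have hy1 : vK (y : K) = 1 := by
    by_contra hne
    rcases lt_or_gt_of_ne hne with h | h
    · exact absurd hyp1 (ne_of_lt (pow_lt_one₀ zero_le h hp.ne_zero))
    · exact absurd hyp1 (ne_of_gt (one_lt_pow₀ h hp.ne_zero))
  refine ⟨b * y, ?_, ?_⟩
  · rw [map_mul, hy1, mul_one, hb]
  · have key : a - (b * (y : K)) ^ p = b ^ p * (a / b ^ p - (y : K) ^ p) := by
      field_simp
      ring
    rw [key, map_mul, map_pow, hb]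
    have hδ : vK (a / b ^ p - (y : K) ^ p) < 1 := by
      rw [← Valuation.map_neg, neg_sub]
      exact hlt1
    calc vK a * vK (a / b ^ p - (y : K) ^ p) < vK a * 1 :=
          mul_lt_mul_of_pos_left hδ (zero_lt_iff.mpr hva)
      _ = vK a := mul_one _

variable {K L : Type*} [Field K] [Field L] [Algebra K L]

/-- The Gauss value of a polynomial. -/
noncomputable def gaussVal (vK : Valuation K ℝ≥0) (vL : Valuation L ℝ≥0)
    {n : ℕ} (t : Fin n → L) (P : MvPolynomial (Fin n) K) : ℝ≥0 :=
  P.support.sup fun l => vK (MvPolynomial.coeff l P) * ∏ i, vL (t i) ^ l i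

theorem vL_aeval_monomial (vK : Valuation K ℝ≥0) (vL : Valuation L ℝ≥0)
    (hext : ∀ x : K, vL (algebraMap K L x) = vK x)
    {n : ℕ} (t : Fin n → L) (l : Fin n →₀ ℕ) (a : K) :
    vL (MvPolynomial.aeval t (monomial l a)) = vK a * ∏ i, vL (t i) ^ l i := by
  rw [aeval_monomial, map_mul, hext]
  congr 1
  have h1 : (l.prod fun i k => t i ^ k) = ∏ i, t i ^ l i :=
    Finsupp.prod_fintype _ _ fun i => pow_zero _
  rw [h1, map_prod]
  exact Finset.prod_congr rfl fun i _ => map_pow vL _ _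

theorem gauss_le (vK : Valuation K ℝ≥0) (vL : Valuation L ℝ≥0)
    (hext : ∀ x : K, vL (algebraMap K L x) = vK x)
    {n : ℕ} (t : Fin n → L) (P : MvPolynomial (Fin n) K) :
    vL (MvPolynomial.aeval t P) ≤ gaussVal vK vL t P := by
  conv_lhs => rw [← P.support_sum_monomial_coeff]
  rw [map_sum]
  exact vL.map_sum_le fun l hl => by
    rw [vL_aeval_monomial vK vL hext]
    exact Finset.le_sup (f := fun l => vK (MvPolynomial.coeff l P) * ∏ i, vL (t i) ^ l i) hl

end GaussAux
theorem gauss_valuation_of_orthonormal_logarithmic_differentials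
    {K L kres : Type*} [Field K] [Field L] [Algebra K L] [Field kres]
    (vK : Valuation K ℝ≥0) (vL : Valuation L ℝ≥0)
    (p : ℕ) [ExpChar kres p] [PerfectRing kres p]
    (π : ↥vK.integer →+* kres) (hπsurj : Function.Surjective π)
    (hπker : ∀ x : vK.integer, π x = 0 ↔ vK ↑x < 1)
    (hdiv : ∀ x : K, x ≠ 0 → ∃ y : K, vK y ^ p = vK x)
    (hext : ∀ x : K, vL (algebraMap K L x) = vK x)
    {n : ℕ} (t : Fin n → L)
    (hindep : AlgebraicIndependent K t)
    (hgen : ∀ x : L, ∃ P Q : MvPolynomial (Fin n) K,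
      MvPolynomial.aeval t Q ≠ 0 ∧ x * MvPolynomial.aeval t Q = MvPolynomial.aeval t P)
    (horth : ∀ a : Fin n → L,
      kahlerSeminorm K L (vL ·)
          (∑ i, a i • ((t i)⁻¹ • KaehlerDifferential.D K L (t i)))
        = Finset.univ.sup fun i => vL (a i)) :
    ∀ P : MvPolynomial (Fin n) K,
      vL (MvPolynomial.aeval t P)
        = P.support.sup fun l => vK (MvPolynomial.coeff l P) * ∏ i, vL (t i) ^ l i := by
  classical
  have ht0 : ∀ i, t i ≠ 0 := by
    intro i hi
    have h1 : MvPolynomial.aeval t (MvPolynomial.X i : MvPolynomial (Fin n) K)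
        = MvPolynomial.aeval t (0 : MvPolynomial (Fin n) K) := by
      simp [hi]
    have h2 := hindep h1
    exact MvPolynomial.X_ne_zero i h2
  have hr0 : ∀ i, vL (t i) ≠ 0 := fun i => by simpa using ht0 i
  have hprodpos : ∀ l : Fin n →₀ ℕ, 0 < ∏ i, vL (t i) ^ l i := fun l =>
    Finset.prod_pos fun i _ => pow_pos (zero_lt_iff.mpr (hr0 i)) _
  -- Step B : the key inequality coming from orthonormality
  have hB : ∀ (Q : MvPolynomial (Fin n) K) (i : Fin n),
      vL (t i) * vL (MvPolynomial.aeval t (MvPolynomial.pderiv i Q))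
        ≤ vL (MvPolynomial.aeval t Q) := by
    intro Q i
    have hd : (∑ j, (t j * MvPolynomial.aeval t (MvPolynomial.pderiv j Q)) •
          ((t j)⁻¹ • KaehlerDifferential.D K L (t j)))
        = KaehlerDifferential.D K L (MvPolynomial.aeval t Q) := by
      rw [GaussAux.derivation_aeval (KaehlerDifferential.D K L) t Q]
      refine Finset.sum_congr rfl fun j _ => ?_
      rw [smul_smul]
      congr 1
      rw [mul_comm (t j), mul_assoc, mul_inv_cancel₀ (ht0 j), mul_one]
    have hle : kahlerSeminorm K L (vL ·)
        (∑ j, (t j * MvPolynomial.aeval t (MvPolynomial.pderiv j Q)) •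
          ((t j)⁻¹ • KaehlerDifferential.D K L (t j))) ≤ vL (MvPolynomial.aeval t Q) := by
      rw [hd]
      refine csInf_le (OrderBot.bddBelow _) ?_
      refine ⟨1, fun _ => 1, fun _ => MvPolynomial.aeval t Q, by simp, ?_⟩
      rw [Finset.sup_const Finset.univ_nonempty]
      simp
    rw [horth] at hle
    calc vL (t i) * vL (MvPolynomial.aeval t (MvPolynomial.pderiv i Q))
        = vL (t i * MvPolynomial.aeval t (MvPolynomial.pderiv i Q)) := (map_mul vL _ _).symm
      _ ≤ Finset.univ.sup (fun j => vL (t j * MvPolynomial.aeval t (MvPolynomial.pderiv j Q))) :=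
          Finset.le_sup (f := fun j => vL (t j * MvPolynomial.aeval t (MvPolynomial.pderiv j Q)))
            (Finset.mem_univ i)
      _ ≤ vL (MvPolynomial.aeval t Q) := hle
  suffices H : ∀ (d : ℕ) (P : MvPolynomial (Fin n) K), P.totalDegree = d →
      vL (MvPolynomial.aeval t P) = GaussAux.gaussVal vK vL t P by
    exact fun P => H P.totalDegree P rfl
  intro d
  induction d using Nat.strong_induction_on with
  | _ d IH =>
  intro P hPd
  by_cases hP0 : P = 0
  · simp [hP0, GaussAux.gaussVal]
  have hsupp : P.support.Nonempty := MvPolynomial.support_nonempty.mpr hP0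
  obtain ⟨l₀, hl₀, hl₀s⟩ := Finset.exists_mem_eq_sup P.support hsupp
    (fun l => vK (MvPolynomial.coeff l P) * ∏ i, vL (t i) ^ l i)
  have hs0 : 0 < GaussAux.gaussVal vK vL t P := by
    rw [GaussAux.gaussVal, hl₀s]
    exact mul_pos (zero_lt_iff.mpr (by simpa using MvPolynomial.mem_support_iff.mp hl₀))
      (hprodpos l₀)
  set M : Finset (Fin n →₀ ℕ) := P.support.filter
    (fun l => vK (MvPolynomial.coeff l P) * ∏ i, vL (t i) ^ l i
      = GaussAux.gaussVal vK vL t P) with hMdef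
  have hl₀M : l₀ ∈ M := Finset.mem_filter.mpr ⟨hl₀, hl₀s.symm⟩
  have hoff : ∀ m ∈ P.support, m ∉ M →
      vK (MvPolynomial.coeff m P) * ∏ i, vL (t i) ^ m i < GaussAux.gaussVal vK vL t P := by
    intro m hm hmM
    refine lt_of_le_of_ne (Finset.le_sup (f := fun l =>
      vK (MvPolynomial.coeff l P) * ∏ i, vL (t i) ^ l i) hm) ?_
    intro heq
    exact hmM (Finset.mem_filter.mpr ⟨hm, heq⟩)
  by_cases hA : ∃ l ∈ M, ∃ i, ((l i : ℕ) : kres) ≠ 0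
  · -- Case A : some maximizing exponent has a coordinate invertible in the residue field
    obtain ⟨l, hlM, i, hli⟩ := hA
    obtain ⟨hlsupp, hlval⟩ := Finset.mem_filter.mp hlM
    have hli0 : l i ≠ 0 := fun h => hli (by rw [h]; simp)
    have hunit : vK ((l i : ℕ) : K) = 1 := by
      rcases lt_or_eq_of_le (GaussAux.val_natCast_le_one vK (l i)) with h | h
      · exfalso
        apply hli
        have hcoe : (((l i : ℕ) : vK.integer) : K) = ((l i : ℕ) : K) := by push_cast; rfl
        have h0 : π ((l i : ℕ) : vK.integer) = 0 := (hπker _).mpr (by rw [hcoe]; exact h)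
        rwa [map_natCast π] at h0
      · exact h
    set l' : Fin n →₀ ℕ := l - Finsupp.single i 1 with hl'def
    have hl'i : l' i = l i - 1 := by
      rw [hl'def, Finsupp.tsub_apply, Finsupp.single_eq_same]
    have hl'ne : ∀ j, j ≠ i → l' j = l j := fun j hj => by
      rw [hl'def, Finsupp.tsub_apply, Finsupp.single_eq_of_ne' (Ne.symm hj), Nat.sub_zero]
    have h1 : l' + Finsupp.single i 1 = l := by
      ext j
      rw [Finsupp.add_apply]
      by_cases hj : j = i
      · subst hj
        rw [hl'i, Finsupp.single_eq_same]
        omega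
      · rw [hl'ne j hj, Finsupp.single_eq_of_ne' (Ne.symm hj)]
        omega
    have hcoeff : MvPolynomial.coeff l' (MvPolynomial.pderiv i P)
        = ((l i : ℕ) : K) * MvPolynomial.coeff l P := by
      rw [GaussAux.coeff_pderiv, h1]
      have h2 : l' i + 1 = l i := by rw [hl'i]; omega
      rw [h2]
    have hc0 : MvPolynomial.coeff l P ≠ 0 := MvPolynomial.mem_support_iff.mp hlsupp
    have hKli : ((l i : ℕ) : K) ≠ 0 := fun h => by rw [h] at hunit; simp at hunit
    have hcne : MvPolynomial.coeff l' (MvPolynomial.pderiv i P) ≠ 0 := by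
      rw [hcoeff]; exact mul_ne_zero hKli hc0
    have hmem₁ : l' ∈ (MvPolynomial.pderiv i P).support :=
      MvPolynomial.mem_support_iff.mpr hcne
    have hd1 : 1 ≤ d := by
      rw [← hPd]
      calc 1 ≤ l.sum fun _ e => e := by
            rw [Finsupp.sum]
            calc 1 ≤ l i := Nat.one_le_iff_ne_zero.mpr hli0
              _ ≤ _ := Finset.single_le_sum (f := fun j => l j)
                  (fun _ _ => Nat.zero_le _) (Finsupp.mem_support_iff.mpr hli0)
        _ ≤ P.totalDegree := MvPolynomial.le_totalDegree hlsupp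
    have hdeg₁ : (MvPolynomial.pderiv i P).totalDegree < d := by
      rw [MvPolynomial.totalDegree]
      refine (Finset.sup_lt_iff (show ⊥ < d from lt_of_lt_of_le Nat.zero_lt_one hd1)).mpr ?_
      intro m hm
      have h2 := MvPolynomial.mem_support_iff.mp hm
      rw [GaussAux.coeff_pderiv] at h2
      have h3 : MvPolynomial.coeff (m + Finsupp.single i 1) P ≠ 0 := right_ne_zero_of_mul h2
      have hmem : (m + Finsupp.single i 1) ∈ P.support := MvPolynomial.mem_support_iff.mpr h3
      calc (m.sum fun _ e => e) < (m.sum fun _ e => e) + 1 := Nat.lt_succ_self _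
        _ = ((m + Finsupp.single i 1).sum fun _ e => e) := by
            rw [Finsupp.sum_add_index' (fun _ => rfl) (fun _ _ _ => rfl),
              Finsupp.sum_single_index rfl]
        _ ≤ P.totalDegree := MvPolynomial.le_totalDegree hmem
        _ = d := hPd
    have hIH₁ : vL (MvPolynomial.aeval t (MvPolynomial.pderiv i P))
        = GaussAux.gaussVal vK vL t (MvPolynomial.pderiv i P) :=
      IH _ hdeg₁ _ rfl
    have hterm : vK (MvPolynomial.coeff l' (MvPolynomial.pderiv i P))
          * ∏ j, vL (t j) ^ l' j
        ≤ GaussAux.gaussVal vK vL t (MvPolynomial.pderiv i P) :=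
      Finset.le_sup (f := fun m => vK (MvPolynomial.coeff m (MvPolynomial.pderiv i P))
        * ∏ j, vL (t j) ^ m j) hmem₁
    have hprod : (∏ j, vL (t j) ^ l j)
        = (∏ j, vL (t j) ^ l' j) * vL (t i) := by
      have hsplit : ∀ j, vL (t j) ^ l j
          = vL (t j) ^ (l' j) * (if j = i then vL (t j) else 1) := by
        intro j
        by_cases hj : j = i
        · subst hj
          rw [if_pos rfl, hl'i, ← pow_succ]
          congr 1
          omega
        · rw [if_neg hj, hl'ne j hj, mul_one]
      rw [Finset.prod_congr rfl fun j _ => hsplit j, Finset.prod_mul_distrib]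
      congr 1
      rw [Finset.prod_ite_eq' Finset.univ i (fun j => vL (t j)), if_pos (Finset.mem_univ i)]
    have hlow : GaussAux.gaussVal vK vL t P ≤ vL (MvPolynomial.aeval t P) := by
      rw [← hlval]
      calc vK (MvPolynomial.coeff l P) * ∏ j, vL (t j) ^ l j
          = vL (t i) * ((vK ((l i : ℕ) : K) * vK (MvPolynomial.coeff l P))
              * ∏ j, vL (t j) ^ l' j) := by
            rw [hunit, hprod]; ring
        _ = vL (t i) * (vK (MvPolynomial.coeff l' (MvPolynomial.pderiv i P))
              * ∏ j, vL (t j) ^ l' j) := by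
            rw [hcoeff, map_mul]
        _ ≤ vL (t i) * GaussAux.gaussVal vK vL t (MvPolynomial.pderiv i P) :=
            mul_le_mul_right hterm _
        _ = vL (t i) * vL (MvPolynomial.aeval t (MvPolynomial.pderiv i P)) := by rw [hIH₁]
        _ ≤ vL (MvPolynomial.aeval t P) := hB P i
    exact le_antisymm (GaussAux.gauss_le vK vL hext t P) hlow
  · push_neg at hA
    by_cases hM0 : ∀ l ∈ M, l = 0
    · -- Case B1 : the constant coefficient strictly dominates
      have h0M : (0 : Fin n →₀ ℕ) ∈ M := by
        have := hM0 l₀ hl₀M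
        rwa [this] at hl₀M
      obtain ⟨h0supp, h0val⟩ := Finset.mem_filter.mp h0M
      have ha0 : vK (MvPolynomial.coeff 0 P) = GaussAux.gaussVal vK vL t P := by
        have hone : (∏ i, vL (t i) ^ (0 : Fin n →₀ ℕ) i) = 1 := by simp
        rwa [hone, mul_one] at h0val
      have hsplit : MvPolynomial.aeval t P
          = algebraMap K L (MvPolynomial.coeff 0 P)
            + MvPolynomial.aeval t (P - MvPolynomial.C (MvPolynomial.coeff 0 P)) := by
        rw [map_sub, MvPolynomial.aeval_C]; ring
      have hP'lt : vL (MvPolynomial.aeval t (P - MvPolynomial.C (MvPolynomial.coeff 0 P)))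
          < GaussAux.gaussVal vK vL t P := by
        refine lt_of_le_of_lt (GaussAux.gauss_le vK vL hext t _) ?_
        rw [GaussAux.gaussVal]
        refine (Finset.sup_lt_iff (show ⊥ < GaussAux.gaussVal vK vL t P from hs0)).mpr ?_
        intro m hm
        have hm0 : m ≠ 0 := by
          intro h
          subst h
          apply MvPolynomial.mem_support_iff.mp hm
          simp [MvPolynomial.coeff_sub]
        have hcm : MvPolynomial.coeff m (P - MvPolynomial.C (MvPolynomial.coeff 0 P))
            = MvPolynomial.coeff m P := by
          rw [MvPolynomial.coeff_sub, MvPolynomial.coeff_C, if_neg (fun h => hm0 h.symm), sub_zero]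
        rw [hcm]
        have hmsupp : m ∈ P.support := by
          rw [MvPolynomial.mem_support_iff, ← hcm]
          exact MvPolynomial.mem_support_iff.mp hm
        refine hoff m hmsupp ?_
        intro hmM
        exact hm0 (hM0 m hmM)
      rw [hsplit, Valuation.map_add_eq_of_lt_left vL (by rw [hext, ha0]; exact hP'lt), hext]
      exact ha0
    · -- Case B2 : all maximizers are p-th powers of monomials
      push_neg at hM0
      obtain ⟨lnz, hlnzM, hlnz0⟩ := hM0
      obtain hP1 | ⟨hpp⟩ := ‹ExpChar kres p›
      · exfalso
        obtain ⟨i, hi⟩ := Finsupp.ne_iff.mp hlnz0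
        apply hi
        have := hA lnz hlnzM i
        simpa using Nat.cast_injective (R := kres) (this.trans (Nat.cast_zero).symm)
      have hdvd : ∀ l ∈ M, ∀ i, p ∣ l i := fun l hl i =>
        (CharP.cast_eq_zero_iff kres p _).mp (hA l hl i)
      have hex : ∀ l ∈ M, ∃ c : K, vK c ^ p = vK (MvPolynomial.coeff l P)
          ∧ vK (MvPolynomial.coeff l P - c ^ p) < vK (MvPolynomial.coeff l P) := fun l hl =>
        GaussAux.root_approx vK p π hπsurj hπker hdiv _
          (MvPolynomial.mem_support_iff.mp (Finset.mem_filter.mp hl).1)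
      choose c hc1 hc2 using hex
      have hcne : ∀ l (hl : l ∈ M), c l hl ≠ 0 := by
        intro l hl h
        have h1 := hc1 l hl
        rw [h] at h1
        rw [map_zero, zero_pow hpp.ne_zero] at h1
        have hne : vK (MvPolynomial.coeff l P) ≠ 0 := by
          simpa using MvPolynomial.mem_support_iff.mp (Finset.mem_filter.mp hl).1
        exact hne h1.symm
      set half : (Fin n →₀ ℕ) → (Fin n →₀ ℕ) :=
        fun l => Finsupp.mapRange (fun k => k / p) (by simp) l with hhalfdef
      have hhalfapp : ∀ (l : Fin n →₀ ℕ) i, half l i = l i / p := fun l i =>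
        Finsupp.mapRange_apply
      have hhalfmul : ∀ l ∈ M, ∀ i, p * (half l i) = l i := fun l hl i => by
        rw [hhalfapp]; exact Nat.mul_div_cancel' (hdvd l hl i)
      have hsmul : ∀ l ∈ M, p • half l = l := by
        intro l hl
        ext i
        rw [Finsupp.smul_apply, smul_eq_mul]
        exact hhalfmul l hl i
      have hinj : ∀ l1 ∈ M, ∀ l2 ∈ M, half l1 = half l2 → l1 = l2 := by
        intro l1 h1 l2 h2 h
        rw [← hsmul l1 h1, ← hsmul l2 h2, h]
      set Q : MvPolynomial (Fin n) K :=
        ∑ b ∈ M.attach, monomial (half b.1) (c b.1 b.2) with hQdef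
      have hQcoeff : ∀ l (hl : l ∈ M), MvPolynomial.coeff (half l) Q = c l hl := by
        intro l hl
        rw [hQdef, MvPolynomial.coeff_sum]
        rw [Finset.sum_eq_single (⟨l, hl⟩ : {x // x ∈ M})]
        · rw [MvPolynomial.coeff_monomial, if_pos rfl]
        · intro b _ hb
          rw [MvPolynomial.coeff_monomial, if_neg]
          intro heq
          exact hb (Subtype.ext (hinj b.1 b.2 l hl heq))
        · intro habs
          exact absurd (Finset.mem_attach _ _) habs
      have hQne : Q ≠ 0 := by
        intro h
        apply hcne lnz hlnzM
        rw [← hQcoeff lnz hlnzM, h]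
        simp
      have hd1 : 1 ≤ d := by
        rw [← hPd]
        obtain ⟨i, hi⟩ := Finsupp.ne_iff.mp hlnz0
        calc 1 ≤ lnz.sum fun _ e => e := by
              rw [Finsupp.sum]
              calc 1 ≤ lnz i := Nat.one_le_iff_ne_zero.mpr (by simpa using hi)
                _ ≤ _ := Finset.single_le_sum (f := fun j => lnz j)
                    (fun _ _ => Nat.zero_le _) (Finsupp.mem_support_iff.mpr (by simpa using hi))
          _ ≤ P.totalDegree := MvPolynomial.le_totalDegree (Finset.mem_filter.mp hlnzM).1
      have hhalfsum : ∀ l ∈ M, ((half l).sum fun _ e => e) < d := by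
        intro l hl
        have h1 : ((half l).sum fun _ e => e) = ∑ i, l i / p := by
          rw [Finsupp.sum_fintype _ _ fun i => rfl]
          exact Finset.sum_congr rfl fun i _ => hhalfapp l i
        have h2 : (l.sum fun _ e => e) = ∑ i, l i :=
          Finsupp.sum_fintype _ _ fun i => rfl
        have h3 : (∑ i, l i / p) ≤ (∑ i, l i) / p := by
          rw [Nat.le_div_iff_mul_le hpp.pos, Finset.sum_mul]
          exact Finset.sum_le_sum fun i _ => Nat.div_mul_le_self _ _
        have h4 : (∑ i, l i) ≤ d := by
          rw [← h2, ← hPd]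
          exact MvPolynomial.le_totalDegree (Finset.mem_filter.mp hl).1
        calc ((half l).sum fun _ e => e) = ∑ i, l i / p := h1
          _ ≤ (∑ i, l i) / p := h3
          _ ≤ d / p := Nat.div_le_div_right h4
          _ < d := Nat.div_lt_self (lt_of_lt_of_le Nat.zero_lt_one hd1) hpp.one_lt
      have hdlt : Q.totalDegree < d := by
        refine lt_of_le_of_lt (MvPolynomial.totalDegree_finset_sum _ _) ?_
        refine (Finset.sup_lt_iff (show ⊥ < d from lt_of_lt_of_le Nat.zero_lt_one hd1)).mpr ?_
        intro b _
        exact lt_of_le_of_lt (MvPolynomial.totalDegree_monomial_le _ _) (hhalfsum b.1 b.2)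
      have hIHQ : vL (MvPolynomial.aeval t Q) = GaussAux.gaussVal vK vL t Q :=
        IH _ hdlt _ rfl
      have hpowval : ∀ l (hl : l ∈ M),
          (vK (c l hl) * ∏ i, vL (t i) ^ (half l) i) ^ p = GaussAux.gaussVal vK vL t P := by
        intro l hl
        rw [mul_pow, hc1 l hl, ← Finset.prod_pow]
        have h5 : ∀ i, (vL (t i) ^ (half l) i) ^ p = vL (t i) ^ l i := by
          intro i
          rw [← pow_mul]
          congr 1
          rw [mul_comm]
          exact hhalfmul l hl i
        rw [Finset.prod_congr rfl fun i _ => h5 i]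
        exact (Finset.mem_filter.mp hl).2
      have hQsupp : ∀ m ∈ Q.support, ∃ l, ∃ hl : l ∈ M, half l = m := by
        intro m hm
        by_contra hcon
        push_neg at hcon
        apply MvPolynomial.mem_support_iff.mp hm
        rw [hQdef, MvPolynomial.coeff_sum]
        exact Finset.sum_eq_zero fun b _ => by
          rw [MvPolynomial.coeff_monomial, if_neg (hcon b.1 b.2)]
      have hGQp : GaussAux.gaussVal vK vL t Q ^ p = GaussAux.gaussVal vK vL t P := by
        obtain ⟨mq, hmq, hGQ⟩ := Finset.exists_mem_eq_sup Q.support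
          (MvPolynomial.support_nonempty.mpr hQne)
          (fun l => vK (MvPolynomial.coeff l Q) * ∏ i, vL (t i) ^ l i)
        obtain ⟨l, hl, hhl⟩ := hQsupp mq hmq
        rw [GaussAux.gaussVal, hGQ, ← hhl, hQcoeff l hl]
        exact hpowval l hl
      have hXeq : ∀ b : {x // x ∈ M},
          vL (MvPolynomial.aeval t (monomial (half b.1) (c b.1 b.2)))
            = GaussAux.gaussVal vK vL t Q := by
        intro b
        refine GaussAux.pow_inj hpp.ne_zero ?_
        rw [GaussAux.vL_aeval_monomial vK vL hext, hpowval b.1 b.2, hGQp]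
      have hpow_b : ∀ b : {x // x ∈ M},
          (MvPolynomial.aeval t (monomial (half b.1) (c b.1 b.2))) ^ p
            = MvPolynomial.aeval t (monomial b.1 (c b.1 b.2 ^ p)) := by
        intro b
        rw [← map_pow, monomial_pow, hsmul b.1 b.2]
      have hvp : vL ((p : ℕ) : L) < 1 := by
        rw [show ((p : ℕ) : L) = algebraMap K L ((p : ℕ) : K) from
          (map_natCast (algebraMap K L) p).symm, hext]
        have hcoe : (((p : ℕ) : vK.integer) : K) = ((p : ℕ) : K) := by push_cast; rfl
        rw [← hcoe]
        refine (hπker _).mp ?_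
        rw [map_natCast π]
        exact CharP.cast_eq_zero kres p
      have hS3 : vL ((MvPolynomial.aeval t Q) ^ p
            - ∑ b ∈ M.attach, MvPolynomial.aeval t (monomial b.1 (c b.1 b.2 ^ p)))
          < GaussAux.gaussVal vK vL t P := by
        have hb1 := GaussAux.val_sum_pow vL hpp M.attach
          (fun b => MvPolynomial.aeval t (monomial (half b.1) (c b.1 b.2)))
          (GaussAux.gaussVal vK vL t Q) (fun b _ => le_of_eq (hXeq b))
        have hg : MvPolynomial.aeval t Q
            = ∑ b ∈ M.attach, MvPolynomial.aeval t (monomial (half b.1) (c b.1 b.2)) := by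
          rw [hQdef, map_sum]
        rw [show (∑ b ∈ M.attach, MvPolynomial.aeval t (monomial b.1 (c b.1 b.2 ^ p)))
            = ∑ b ∈ M.attach, (MvPolynomial.aeval t (monomial (half b.1) (c b.1 b.2))) ^ p from
          Finset.sum_congr rfl fun b _ => (hpow_b b).symm, hg]
        refine lt_of_le_of_lt hb1 ?_
        rw [hGQp]
        exact mul_lt_of_lt_one_left hs0 hvp
      have hS1 : vL (∑ b ∈ M.attach,
            MvPolynomial.aeval t (monomial b.1 (MvPolynomial.coeff b.1 P - c b.1 b.2 ^ p)))
          < GaussAux.gaussVal vK vL t P := by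
        refine vL.map_sum_lt hs0.ne' fun b _ => ?_
        rw [GaussAux.vL_aeval_monomial vK vL hext]
        calc vK (MvPolynomial.coeff b.1 P - c b.1 b.2 ^ p) * ∏ i, vL (t i) ^ (b.1) i
            < vK (MvPolynomial.coeff b.1 P) * ∏ i, vL (t i) ^ (b.1) i :=
              mul_lt_mul_of_pos_right (hc2 b.1 b.2) (hprodpos b.1)
          _ = GaussAux.gaussVal vK vL t P := (Finset.mem_filter.mp b.2).2
      have hS2 : vL (∑ m ∈ P.support \ M,
            MvPolynomial.aeval t (monomial m (MvPolynomial.coeff m P)))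
          < GaussAux.gaussVal vK vL t P := by
        refine vL.map_sum_lt hs0.ne' fun m hm => ?_
        obtain ⟨hm1, hm2⟩ := Finset.mem_sdiff.mp hm
        rw [GaussAux.vL_aeval_monomial vK vL hext]
        exact hoff m hm1 hm2
      have hsplit : MvPolynomial.aeval t P - (MvPolynomial.aeval t Q) ^ p
          = (∑ b ∈ M.attach,
              MvPolynomial.aeval t (monomial b.1 (MvPolynomial.coeff b.1 P - c b.1 b.2 ^ p)))
            + (∑ m ∈ P.support \ M,
              MvPolynomial.aeval t (monomial m (MvPolynomial.coeff m P)))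
            - ((MvPolynomial.aeval t Q) ^ p
              - ∑ b ∈ M.attach, MvPolynomial.aeval t (monomial b.1 (c b.1 b.2 ^ p))) := by
        have hMsub : M ⊆ P.support := Finset.filter_subset _ _
        have hPsum : MvPolynomial.aeval t P
            = (∑ b ∈ M.attach, MvPolynomial.aeval t (monomial b.1 (MvPolynomial.coeff b.1 P)))
              + ∑ m ∈ P.support \ M,
                MvPolynomial.aeval t (monomial m (MvPolynomial.coeff m P)) := by
          conv_lhs => rw [← P.support_sum_monomial_coeff]
          rw [map_sum, ← Finset.sum_sdiff hMsub, Finset.sum_attach M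
            (fun l => MvPolynomial.aeval t (monomial l (MvPolynomial.coeff l P)))]
          ring
        have hmono : ∀ b : {x // x ∈ M},
            MvPolynomial.aeval t (monomial b.1 (MvPolynomial.coeff b.1 P))
              = MvPolynomial.aeval t (monomial b.1 (MvPolynomial.coeff b.1 P - c b.1 b.2 ^ p))
                + MvPolynomial.aeval t (monomial b.1 (c b.1 b.2 ^ p)) := by
          intro b
          rw [← map_add, ← map_add]
          congr 1
          rw [sub_add_cancel]
        rw [hPsum, Finset.sum_congr rfl fun b _ => hmono b, Finset.sum_add_distrib]
        ring
      have hE : vL (MvPolynomial.aeval t P - (MvPolynomial.aeval t Q) ^ p)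
          < GaussAux.gaussVal vK vL t P := by
        rw [hsplit]
        refine lt_of_le_of_lt (vL.map_sub _ _) (max_lt ?_ hS3)
        exact lt_of_le_of_lt (vL.map_add _ _) (max_lt hS1 hS2)
      have hfin : MvPolynomial.aeval t P
          = (MvPolynomial.aeval t Q) ^ p
            + (MvPolynomial.aeval t P - (MvPolynomial.aeval t Q) ^ p) := by ring
      have hgp : vL ((MvPolynomial.aeval t Q) ^ p) = GaussAux.gaussVal vK vL t P := by
        rw [map_pow, hIHQ, hGQp]
      rw [hfin, Valuation.map_add_eq_of_lt_left vL (by rw [hgp]; exact hE)]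
      exact hgp
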